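/- For any real β, ω, Hermitian H, and matrix A with ‖A‖ ≤ 1, the operator norm of the imaginary-time-conjugated operator Fourier transform obeys ‖e^{βH} Â_H(ω) e^{-βH}‖ ≤ e^{σ²β²} e^{βω} / √(σ√(2π)). -/

import Mathlib

set_option maxHeartbeats 1000000


open scoped Matrix.Norms.L2Operator

open Matrix Complex Real MeasureTheory

/-- The Gaussian weight `f(t) = e^{-σ²t²} √(σ√(2/π))`. -/
noncomputable def gaussWeight (σ t : ℝ) : ℝ :=
  Real.exp (-(σ ^ 2 * t ^ 2)) * Real.sqrt (σ * Real.sqrt (2 / π))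

/-- The operator Fourier transform
`Â_H(ω) = (2π)^{-1/2} ∫ e^{iHt} A e^{-iHt} e^{-iωt} f(t) dt` with Gaussian width `σ`. -/
noncomputable def oftInt {m : ℕ} (H A : Matrix (Fin m) (Fin m) ℂ) (σ ω : ℝ) :
    Matrix (Fin m) (Fin m) ℂ :=
  ((Real.sqrt (2 * π) : ℂ))⁻¹ •
    ∫ t : ℝ, (Complex.exp (-(I * ω * t)) * (gaussWeight σ t : ℂ)) •
      (NormedSpace.exp ((I * t) • H) * A * NormedSpace.exp ((-(I * t)) • H))

section Aux

variable {m : ℕ}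

noncomputable def phaseInt (σ ω ν : ℝ) : ℂ :=
  ∫ t : ℝ, Complex.exp (-(I * ω * t)) * (gaussWeight σ t : ℂ) * Complex.exp (I * t * ν)

lemma phaseInt_eq {σ : ℝ} (hσ : 0 < σ) (ω ν : ℝ) :
    phaseInt σ ω ν = (Real.sqrt (σ * Real.sqrt (2 / π)) : ℂ) *
      (((π : ℂ) / (σ : ℂ) ^ 2) ^ (1 / 2 : ℂ) *
        Complex.exp (-((ν : ℂ) - (ω : ℂ)) ^ 2 / (4 * (σ : ℂ) ^ 2))) := by
  set K : ℂ := (Real.sqrt (σ * Real.sqrt (2 / π)) : ℂ) with hK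
  have hb : (0 : ℝ) < ((σ : ℂ) ^ 2).re := by
    simp only [← Complex.ofReal_pow, Complex.ofReal_re]
    positivity
  have h1 : ∀ t : ℝ, Complex.exp (-(I * ω * t)) * (gaussWeight σ t : ℂ) *
      Complex.exp (I * t * ν) =
      K * (Complex.exp (I * ((ν : ℂ) - ω) * t) * Complex.exp (-(σ : ℂ) ^ 2 * t ^ 2)) := by
    intro t
    simp only [gaussWeight, Complex.ofReal_mul, Complex.ofReal_exp, ← hK]
    rw [show Complex.exp (I * ((ν : ℂ) - ω) * t) * Complex.exp (-(σ : ℂ) ^ 2 * t ^ 2)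
        = Complex.exp (-(I * ω * t)) * Complex.exp ((-(σ ^ 2 * t ^ 2) : ℝ) : ℂ) *
          Complex.exp (I * t * ν) from by
      rw [← Complex.exp_add, ← Complex.exp_add, ← Complex.exp_add]
      congr 1; push_cast; ring]
    ring
  unfold phaseInt
  rw [show (fun t : ℝ => Complex.exp (-(I * ω * t)) * (gaussWeight σ t : ℂ) *
      Complex.exp (I * t * ν)) = fun t : ℝ =>
      K * (Complex.exp (I * ((ν : ℂ) - ω) * t) * Complex.exp (-(σ : ℂ) ^ 2 * t ^ 2))
    from funext h1]
  rw [MeasureTheory.integral_const_mul, fourierIntegral_gaussian hb ((ν : ℂ) - ω)]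

lemma phase_shift {σ : ℝ} (hσ : 0 < σ) (β ω ν : ℝ) :
    Complex.exp ((β : ℂ) * (ν : ℂ)) * phaseInt σ ω ν =
      Complex.exp (((σ ^ 2 * β ^ 2 + β * ω : ℝ) : ℂ)) * phaseInt σ (ω + 2 * σ ^ 2 * β) ν := by
  rw [phaseInt_eq hσ, phaseInt_eq hσ]
  have hσ' : (σ : ℂ) ≠ 0 := Complex.ofReal_ne_zero.mpr hσ.ne'
  rw [show Complex.exp ((β : ℂ) * ν) * ((Real.sqrt (σ * Real.sqrt (2 / π)) : ℂ) *
      (((π : ℂ) / (σ : ℂ) ^ 2) ^ (1 / 2 : ℂ) *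
        Complex.exp (-((ν : ℂ) - (ω : ℂ)) ^ 2 / (4 * (σ : ℂ) ^ 2))))
      = (Real.sqrt (σ * Real.sqrt (2 / π)) : ℂ) * (((π : ℂ) / (σ : ℂ) ^ 2) ^ (1 / 2 : ℂ) *
        (Complex.exp ((β : ℂ) * ν) *
          Complex.exp (-((ν : ℂ) - (ω : ℂ)) ^ 2 / (4 * (σ : ℂ) ^ 2)))) from by ring]
  rw [show Complex.exp (((σ ^ 2 * β ^ 2 + β * ω : ℝ) : ℂ)) *
      ((Real.sqrt (σ * Real.sqrt (2 / π)) : ℂ) * (((π : ℂ) / (σ : ℂ) ^ 2) ^ (1 / 2 : ℂ) *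
        Complex.exp (-((ν : ℂ) - ((ω + 2 * σ ^ 2 * β : ℝ) : ℂ)) ^ 2 / (4 * (σ : ℂ) ^ 2))))
      = (Real.sqrt (σ * Real.sqrt (2 / π)) : ℂ) * (((π : ℂ) / (σ : ℂ) ^ 2) ^ (1 / 2 : ℂ) *
        (Complex.exp (((σ ^ 2 * β ^ 2 + β * ω : ℝ) : ℂ)) *
          Complex.exp (-((ν : ℂ) - ((ω + 2 * σ ^ 2 * β : ℝ) : ℂ)) ^ 2 / (4 * (σ : ℂ) ^ 2)))) from by
    ring]
  congr 1
  congr 1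
  rw [← Complex.exp_add, ← Complex.exp_add]
  congr 1
  push_cast
  field_simp
  ring

lemma const_eq {σ : ℝ} (hσ : 0 < σ) :
    (Real.sqrt (2 * π))⁻¹ * (Real.sqrt (σ * Real.sqrt (2 / π)) * Real.sqrt (π / σ ^ 2)) =
      (Real.sqrt (σ * Real.sqrt (2 * π)))⁻¹ := by
  have hπ := Real.pi_pos
  have hπ2 : (0:ℝ) < 2 * π := by positivity
  have h1 : Real.sqrt (π / σ ^ 2) = Real.sqrt π / σ := by
    rw [Real.sqrt_div hπ.le, Real.sqrt_sq hσ.le]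
  have h2 : Real.sqrt (2 / π) * Real.sqrt (2 * π) = 2 := by
    rw [← Real.sqrt_mul (by positivity), show 2 / π * (2 * π) = 2 ^ 2 by field_simp,
      Real.sqrt_sq (by norm_num)]
  have hBD : Real.sqrt (σ * Real.sqrt (2 / π)) * Real.sqrt (σ * Real.sqrt (2 * π)) =
      σ * Real.sqrt 2 := by
    rw [← Real.sqrt_mul (by positivity),
      show σ * Real.sqrt (2 / π) * (σ * Real.sqrt (2 * π))
        = σ ^ 2 * (Real.sqrt (2 / π) * Real.sqrt (2 * π)) by ring, h2,
      Real.sqrt_mul (by positivity), Real.sqrt_sq hσ.le]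
  have h3 : Real.sqrt 2 * Real.sqrt π = Real.sqrt (2 * π) := (Real.sqrt_mul (by norm_num) _).symm
  have hA : Real.sqrt (2 * π) ≠ 0 := by positivity
  have hD : Real.sqrt (σ * Real.sqrt (2 * π)) ≠ 0 := by positivity
  rw [h1]
  field_simp
  have e1 : Real.sqrt σ ^ 2 = σ := Real.sq_sqrt hσ.le
  have e2 : Real.sqrt (Real.sqrt 2) ^ 2 = Real.sqrt 2 := Real.sq_sqrt (Real.sqrt_nonneg 2)
  have h4 : Real.sqrt π * (Real.sqrt (σ * Real.sqrt (2 / π)) * Real.sqrt (σ * Real.sqrt (2 * π)))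
      = σ * Real.sqrt (2 * π) := by rw [hBD]; linear_combination σ * h3
  have h5 : Real.sqrt (Real.sqrt (2 * π) * σ) = Real.sqrt (σ * Real.sqrt (2 * π)) := by
    rw [mul_comm]
  rw [h5]
  linear_combination h4

lemma exp_smul_eq (H : Matrix (Fin m) (Fin m) ℂ) (hH : H.IsHermitian) (z : ℂ) :
    NormedSpace.exp (z • H) =
      (hH.eigenvectorUnitary : Matrix (Fin m) (Fin m) ℂ) *
        diagonal (fun i => Complex.exp (z * hH.eigenvalues i)) *
        star (hH.eigenvectorUnitary : Matrix (Fin m) (Fin m) ℂ) := by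
  set U := (hH.eigenvectorUnitary : Matrix (Fin m) (Fin m) ℂ) with hU
  have hU1 : U * star U = 1 := mem_unitaryGroup_iff.mp hH.eigenvectorUnitary.2
  have hU2 : star U * U = 1 := mem_unitaryGroup_iff'.mp hH.eigenvectorUnitary.2
  have hUnit : IsUnit U := ⟨⟨U, star U, hU1, hU2⟩, rfl⟩
  have hinv : U⁻¹ = star U := inv_eq_left_inv hU2
  have h1 : z • H = U * (z • diagonal (RCLike.ofReal ∘ hH.eigenvalues)) * U⁻¹ := by
    rw [hinv]
    conv_lhs => rw [hH.spectral_theorem, Unitary.conjStarAlgAut_apply]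
    rw [Matrix.mul_smul, Matrix.smul_mul]
  rw [h1, Matrix.exp_conj U _ hUnit, hinv]
  congr 1
  congr 1
  rw [← Matrix.diagonal_smul, Matrix.exp_diagonal]
  congr 1
  rw [Pi.exp_def]
  funext i
  simp [Function.comp, ← Complex.exp_eq_exp_ℂ, ← Complex.exp_eq_exp_ℂ]


lemma gaussWeight_nonneg (σ t : ℝ) : 0 ≤ gaussWeight σ t := by
  unfold gaussWeight; positivity

lemma nontrivial_of_pos (hm : 0 < m) : Nontrivial (Matrix (Fin m) (Fin m) ℂ) :=
  ⟨⟨0, 1, fun h => by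
    have := congr_fun (congr_fun h ⟨0, hm⟩) ⟨0, hm⟩
    simp [Matrix.one_apply] at this⟩⟩

lemma norm_diagonal_unit (hm : 0 < m) (d : Fin m → ℂ) (hd : ∀ i, ‖d i‖ = 1) :
    ‖(diagonal d : Matrix (Fin m) (Fin m) ℂ)‖ = 1 := by
  haveI := nontrivial_of_pos hm
  have hmem : diagonal d ∈ unitary (Matrix (Fin m) (Fin m) ℂ) := by
    have h1 : ∀ i, (starRingEnd ℂ) (d i) * d i = 1 := by
      intro i
      rw [mul_comm, Complex.mul_conj]
      norm_cast
      simp [Complex.normSq_eq_norm_sq, hd i]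
    constructor
    · show star (diagonal d) * diagonal d = 1
      rw [Matrix.star_eq_conjTranspose, Matrix.diagonal_conjTranspose,
        diagonal_mul_diagonal,
        show (fun i => star d i * d i) = fun _ => (1 : ℂ) from funext fun i => h1 i]
      exact Matrix.diagonal_one
    · show diagonal d * star (diagonal d) = 1
      rw [Matrix.star_eq_conjTranspose, Matrix.diagonal_conjTranspose,
        diagonal_mul_diagonal,
        show (fun i => d i * star d i) = fun _ => (1 : ℂ) from
          funext fun i => by rw [mul_comm]; exact h1 i]
      exact Matrix.diagonal_one
  exact CStarRing.norm_coe_unitary ⟨_, hmem⟩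

lemma norm_exp_unitary (hm : 0 < m) (H : Matrix (Fin m) (Fin m) ℂ) (hH : H.IsHermitian)
    (t : ℝ) : ‖NormedSpace.exp ((I * (t : ℂ)) • H)‖ = 1 := by
  haveI := nontrivial_of_pos hm
  have hstar : star (NormedSpace.exp ((I * (t : ℂ)) • H)) =
      NormedSpace.exp ((-(I * (t : ℂ))) • H) := by
    rw [Matrix.star_eq_conjTranspose, ← Matrix.exp_conjTranspose]
    congr 1
    rw [Matrix.conjTranspose_smul, hH.eq]
    congr 1
    simp
  have hcomm : Commute ((-(I * (t : ℂ))) • H) ((I * (t : ℂ)) • H) :=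
    ((Commute.refl H).smul_left _).smul_right _
  have hmul : NormedSpace.exp ((-(I * (t : ℂ))) • H) * NormedSpace.exp ((I * (t : ℂ)) • H)
      = 1 := by
    rw [← Matrix.exp_add_of_commute _ _ hcomm]
    rw [show (-(I * (t : ℂ))) • H + (I * (t : ℂ)) • H = 0 by rw [← add_smul]; simp]
    exact NormedSpace.exp_zero
  have hmul' : NormedSpace.exp ((I * (t : ℂ)) • H) * NormedSpace.exp ((-(I * (t : ℂ))) • H)
      = 1 := by
    rw [← Matrix.exp_add_of_commute _ _ hcomm.symm]
    rw [show (I * (t : ℂ)) • H + (-(I * (t : ℂ))) • H = 0 by rw [← add_smul]; simp]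
    exact NormedSpace.exp_zero
  have hmem : NormedSpace.exp ((I * (t : ℂ)) • H) ∈ unitary (Matrix (Fin m) (Fin m) ℂ) :=
    ⟨by rw [hstar]; exact hmul, by rw [hstar]; exact hmul'⟩
  exact CStarRing.norm_coe_unitary ⟨_, hmem⟩

/-- entry evaluation as a CLM -/
noncomputable def entryCLM (j k : Fin m) : Matrix (Fin m) (Fin m) ℂ →L[ℂ] ℂ :=
  LinearMap.toContinuousLinearMap
    { toFun := fun M => M j k
      map_add' := fun _ _ => rfl
      map_smul' := fun _ _ => rfl }

/-- two-sided multiplication as a CLM -/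
noncomputable def conjCLM (U V : Matrix (Fin m) (Fin m) ℂ) :
    Matrix (Fin m) (Fin m) ℂ →L[ℂ] Matrix (Fin m) (Fin m) ℂ :=
  LinearMap.toContinuousLinearMap
    { toFun := fun X => U * X * V
      map_add' := fun X Y => by simp [Matrix.mul_add, Matrix.add_mul]
      map_smul' := fun c X => by simp [Matrix.mul_smul, Matrix.smul_mul] }

lemma integrable_gauss_dom {σ : ℝ} (hσ : 0 < σ) (C : ℝ)
    (F : ℝ → Matrix (Fin m) (Fin m) ℂ) (hF : Continuous F)
    (hC : ∀ t, ‖F t‖ ≤ C * gaussWeight σ t) : Integrable F := by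
  have hg : Integrable (fun t : ℝ => gaussWeight σ t) := by
    unfold gaussWeight
    simpa [neg_mul] using
      (integrable_exp_neg_mul_sq (by positivity : (0 : ℝ) < σ ^ 2)).mul_const
        (Real.sqrt (σ * Real.sqrt (2 / π)))
  exact Integrable.mono' (hg.const_mul C) hF.aestronglyMeasurable
    (Filter.Eventually.of_forall hC)

lemma oftInt_eq (hm : 0 < m) (H A : Matrix (Fin m) (Fin m) ℂ) (hH : H.IsHermitian)
    {σ : ℝ} (hσ : 0 < σ) (ω : ℝ) :
    oftInt H A σ ω = ((Real.sqrt (2 * π) : ℂ))⁻¹ •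
      ((hH.eigenvectorUnitary : Matrix (Fin m) (Fin m) ℂ) *
        Matrix.of (fun j k => phaseInt σ ω (hH.eigenvalues j - hH.eigenvalues k) *
          (star (hH.eigenvectorUnitary : Matrix (Fin m) (Fin m) ℂ) * A *
            (hH.eigenvectorUnitary : Matrix (Fin m) (Fin m) ℂ)) j k) *
        star (hH.eigenvectorUnitary : Matrix (Fin m) (Fin m) ℂ)) := by
  set U := (hH.eigenvectorUnitary : Matrix (Fin m) (Fin m) ℂ) with hUdef
  set V := star U with hVdef
  set B := V * A * U with hBdef
  set ev := hH.eigenvalues with hevdef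
  set c : ℝ → ℂ := fun t => Complex.exp (-(I * ω * t)) * (gaussWeight σ t : ℂ) with hcdef
  set G : ℝ → Matrix (Fin m) (Fin m) ℂ := fun t =>
    c t • (diagonal (fun i => Complex.exp (I * t * ev i)) * B *
      diagonal (fun i => Complex.exp (-(I * t) * ev i))) with hGdef
  have hcnorm : ∀ t, ‖c t‖ = gaussWeight σ t := by
    intro t
    rw [hcdef]
    simp only [norm_mul, Complex.norm_exp]
    rw [show (-(I * (ω : ℂ) * (t : ℝ))).re = 0 by simp]
    rw [Complex.norm_real, Real.exp_zero, one_mul,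
      Real.norm_of_nonneg (gaussWeight_nonneg σ t)]
  have hGnorm : ∀ t, ‖G t‖ ≤ ‖B‖ * gaussWeight σ t := by
    intro t
    rw [hGdef]
    simp only [norm_smul, hcnorm]
    have h1 : ‖diagonal (fun i => Complex.exp (I * t * ev i)) * B *
        diagonal (fun i => Complex.exp (-(I * t) * ev i))‖ ≤ ‖B‖ := by
      calc ‖diagonal (fun i => Complex.exp (I * t * ev i)) * B *
          diagonal (fun i => Complex.exp (-(I * t) * ev i))‖
          ≤ ‖diagonal (fun i => Complex.exp (I * t * ev i)) * B‖ *
            ‖diagonal (fun i => Complex.exp (-(I * t) * ev i))‖ := l2_opNorm_mul _ _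
        _ ≤ ‖diagonal (fun i => Complex.exp (I * t * ev i))‖ * ‖B‖ *
            ‖diagonal (fun i => Complex.exp (-(I * t) * ev i))‖ := by
            gcongr; exact l2_opNorm_mul _ _
        _ = ‖B‖ := by
            rw [norm_diagonal_unit hm _ (fun i => by
                rw [Complex.norm_exp]; simp),
              norm_diagonal_unit hm _ (fun i => by
                rw [Complex.norm_exp]; simp)]
            ring
    calc gaussWeight σ t * ‖diagonal (fun i => Complex.exp (I * t * ev i)) * B *
        diagonal (fun i => Complex.exp (-(I * t) * ev i))‖
        ≤ gaussWeight σ t * ‖B‖ := by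
          exact mul_le_mul_of_nonneg_left h1 (gaussWeight_nonneg σ t)
      _ = ‖B‖ * gaussWeight σ t := mul_comm _ _
  have hGcont : Continuous G := by
    refine Continuous.smul (f := c) (g := fun t => diagonal (fun i => Complex.exp (I * t * ev i)) * B *
        diagonal (fun i => Complex.exp (-(I * t) * ev i))) ?_ ?_
    · rw [hcdef]
      apply Continuous.mul
      · exact Complex.continuous_exp.comp (by fun_prop)
      · apply Complex.continuous_ofReal.comp
        unfold gaussWeight
        fun_prop
    · exact ((Continuous.matrix_diagonal (by fun_prop)).matrix_mul
        continuous_const).matrix_mul (Continuous.matrix_diagonal (by fun_prop))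
  have hGint : Integrable G := integrable_gauss_dom hσ ‖B‖ G hGcont hGnorm
  have hrw : (fun t : ℝ => (Complex.exp (-(I * ω * t)) * (gaussWeight σ t : ℂ)) •
      (NormedSpace.exp ((I * (t : ℂ)) • H) * A * NormedSpace.exp ((-(I * (t : ℂ))) • H)))
      = fun t => conjCLM U V (G t) := by
    funext t
    rw [exp_smul_eq H hH (I * (t : ℂ)), exp_smul_eq H hH (-(I * (t : ℂ)))]
    show _ = conjCLM U V (G t)
    simp only [conjCLM, LinearMap.coe_toContinuousLinearMap', LinearMap.coe_mk, AddHom.coe_mk]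
    rw [hGdef, Matrix.mul_smul, Matrix.smul_mul]
    congr 1
    simp only [hBdef, hVdef, hevdef, hUdef, Matrix.mul_assoc]
  have hGval : ∫ t, G t = Matrix.of (fun j k => phaseInt σ ω (ev j - ev k) * B j k) := by
    ext j k
    have h1 : (∫ t, G t) j k = ∫ t, (G t) j k := by
      have h2 := (entryCLM j k).integral_comp_comm hGint
      exact h2.symm
    rw [h1]
    have h3 : (fun t : ℝ => (G t) j k) = fun t : ℝ =>
        (Complex.exp (-(I * ω * t)) * (gaussWeight σ t : ℂ) *
          Complex.exp (I * t * ((ev j - ev k : ℝ) : ℂ))) * B j k := by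
      funext t
      rw [hGdef]
      simp only [Matrix.smul_apply, smul_eq_mul]
      rw [Matrix.mul_diagonal, Matrix.diagonal_mul]
      rw [show Complex.exp (I * t * ((ev j - ev k : ℝ) : ℂ)) =
          Complex.exp (I * t * ev j) * Complex.exp (-(I * t) * ev k) from by
        rw [← Complex.exp_add]; congr 1; push_cast; ring]
      ring
    rw [h3, MeasureTheory.integral_mul_const]
    simp only [Matrix.of_apply]
    rfl
  unfold oftInt
  rw [hrw, (conjCLM U V).integral_comp_comm hGint, hGval]
  rfl

lemma exp_conj_oftInt (hm : 0 < m) (H A : Matrix (Fin m) (Fin m) ℂ) (hH : H.IsHermitian)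
    {σ : ℝ} (hσ : 0 < σ) (β ω : ℝ) :
    NormedSpace.exp ((β : ℂ) • H) * oftInt H A σ ω * NormedSpace.exp ((-(β : ℂ)) • H) =
      Complex.exp (((σ ^ 2 * β ^ 2 + β * ω : ℝ) : ℂ)) • oftInt H A σ (ω + 2 * σ ^ 2 * β) := by
  rw [oftInt_eq hm H A hH hσ ω, oftInt_eq hm H A hH hσ (ω + 2 * σ ^ 2 * β),
    exp_smul_eq H hH (β : ℂ), exp_smul_eq H hH (-(β : ℂ))]
  set U := (hH.eigenvectorUnitary : Matrix (Fin m) (Fin m) ℂ) with hUdef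
  set V := star U with hVdef
  set B := V * A * U with hBdef
  set ev := hH.eigenvalues with hevdef
  have hVU : V * U = 1 := mem_unitaryGroup_iff'.mp hH.eigenvectorUnitary.2
  have hcancel : ∀ X : Matrix (Fin m) (Fin m) ℂ, V * (U * X) = X := fun X => by
    rw [← Matrix.mul_assoc, hVU, Matrix.one_mul]
  set e : ℂ := Complex.exp (((σ ^ 2 * β ^ 2 + β * ω : ℝ) : ℂ)) with hedef
  set M1 : Matrix (Fin m) (Fin m) ℂ :=
    Matrix.of (fun j k => phaseInt σ ω (ev j - ev k) * B j k) with hM1def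
  set M2 : Matrix (Fin m) (Fin m) ℂ :=
    Matrix.of (fun j k => phaseInt σ (ω + 2 * σ ^ 2 * β) (ev j - ev k) * B j k) with hM2def
  set D1 := diagonal (fun i => Complex.exp ((β : ℂ) * ev i)) with hD1def
  set D2 := diagonal (fun i => Complex.exp ((-(β : ℂ)) * ev i)) with hD2def
  have hkey : D1 * M1 * D2 = e • M2 := by
    ext j k
    rw [Matrix.mul_diagonal, Matrix.diagonal_mul, Matrix.smul_apply, hM1def, hM2def]
    simp only [Matrix.of_apply, smul_eq_mul]
    have hps := phase_shift hσ β ω (ev j - ev k)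
    calc Complex.exp ((β : ℂ) * ev j) * (phaseInt σ ω (ev j - ev k) * B j k) *
        Complex.exp ((-(β : ℂ)) * ev k)
        = (Complex.exp ((β : ℂ) * ev j) * Complex.exp ((-(β : ℂ)) * ev k)) *
          phaseInt σ ω (ev j - ev k) * B j k := by ring
      _ = Complex.exp ((β : ℂ) * ((ev j - ev k : ℝ) : ℂ)) *
          phaseInt σ ω (ev j - ev k) * B j k := by
          rw [← Complex.exp_add]
          congr 2
          push_cast
          ring
      _ = Complex.exp (((σ ^ 2 * β ^ 2 + β * ω : ℝ) : ℂ)) *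
          phaseInt σ (ω + 2 * σ ^ 2 * β) (ev j - ev k) * B j k := by
          linear_combination B j k * hps
      _ = e * (phaseInt σ (ω + 2 * σ ^ 2 * β) (ev j - ev k) * B j k) := by
          rw [hedef]; ring
  calc U * D1 * V * (((Real.sqrt (2 * π) : ℂ))⁻¹ • (U * M1 * V)) * (U * D2 * V)
      = ((Real.sqrt (2 * π) : ℂ))⁻¹ • (U * D1 * V * (U * M1 * V) * (U * D2 * V)) := by
        rw [Matrix.mul_smul, Matrix.smul_mul]
    _ = ((Real.sqrt (2 * π) : ℂ))⁻¹ • (U * (D1 * (M1 * (D2 * V)))) := by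
        congr 1
        simp only [Matrix.mul_assoc]
        rw [hcancel, hcancel]
    _ = ((Real.sqrt (2 * π) : ℂ))⁻¹ • (U * ((D1 * M1 * D2) * V)) := by
        simp only [Matrix.mul_assoc]
    _ = ((Real.sqrt (2 * π) : ℂ))⁻¹ • (U * ((e • M2) * V)) := by rw [hkey]
    _ = e • ((Real.sqrt (2 * π) : ℂ))⁻¹ • (U * M2 * V) := by
        simp only [Matrix.smul_mul, Matrix.mul_smul, Matrix.mul_assoc]
        rw [smul_comm]

lemma norm_oftInt_le (hm : 0 < m) (H A : Matrix (Fin m) (Fin m) ℂ) (hH : H.IsHermitian)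
    (hA : ‖A‖ ≤ 1) {σ : ℝ} (hσ : 0 < σ) (ω : ℝ) :
    ‖oftInt H A σ ω‖ ≤ (Real.sqrt (σ * Real.sqrt (2 * π)))⁻¹ := by
  have hgint : Integrable (fun t : ℝ => gaussWeight σ t) := by
    unfold gaussWeight
    simpa [neg_mul] using
      (integrable_exp_neg_mul_sq (by positivity : (0 : ℝ) < σ ^ 2)).mul_const
        (Real.sqrt (σ * Real.sqrt (2 / π)))
  unfold oftInt
  rw [norm_smul]
  have h0 : ‖((Real.sqrt (2 * π) : ℝ) : ℂ)⁻¹‖ = (Real.sqrt (2 * π))⁻¹ := by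
    rw [norm_inv, Complex.norm_real, Real.norm_of_nonneg (Real.sqrt_nonneg _)]
  rw [h0]
  have hbound : ‖∫ t : ℝ, (Complex.exp (-(I * ω * t)) * (gaussWeight σ t : ℂ)) •
      (NormedSpace.exp ((I * (t : ℂ)) • H) * A *
        NormedSpace.exp ((-(I * (t : ℂ))) • H))‖ ≤ ∫ t : ℝ, gaussWeight σ t := by
    apply norm_integral_le_of_norm_le hgint
    apply Filter.Eventually.of_forall
    intro t
    rw [norm_smul]
    have hc : ‖Complex.exp (-(I * ω * t)) * (gaussWeight σ t : ℂ)‖ = gaussWeight σ t := by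
      simp only [norm_mul, Complex.norm_exp]
      rw [show (-(I * (ω : ℂ) * (t : ℝ))).re = 0 by simp]
      rw [Complex.norm_real, Real.exp_zero, one_mul,
        Real.norm_of_nonneg (gaussWeight_nonneg σ t)]
    rw [hc]
    have hE1 : ‖NormedSpace.exp ((I * (t : ℂ)) • H)‖ = 1 := norm_exp_unitary hm H hH t
    have hE2 : ‖NormedSpace.exp ((-(I * (t : ℂ))) • H)‖ = 1 := by
      rw [show (-(I * (t : ℂ))) • H = (I * ((-t : ℝ) : ℂ)) • H by push_cast; ring_nf]
      exact norm_exp_unitary hm H hH (-t)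
    have hprod : ‖NormedSpace.exp ((I * (t : ℂ)) • H) * A *
        NormedSpace.exp ((-(I * (t : ℂ))) • H)‖ ≤ 1 := by
      calc ‖NormedSpace.exp ((I * (t : ℂ)) • H) * A *
          NormedSpace.exp ((-(I * (t : ℂ))) • H)‖
          ≤ ‖NormedSpace.exp ((I * (t : ℂ)) • H) * A‖ *
            ‖NormedSpace.exp ((-(I * (t : ℂ))) • H)‖ := l2_opNorm_mul _ _
        _ ≤ ‖NormedSpace.exp ((I * (t : ℂ)) • H)‖ * ‖A‖ *
            ‖NormedSpace.exp ((-(I * (t : ℂ))) • H)‖ := by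
            gcongr
            exact l2_opNorm_mul _ _
        _ ≤ 1 := by rw [hE1, hE2]; simpa using hA
    calc gaussWeight σ t * ‖NormedSpace.exp ((I * (t : ℂ)) • H) * A *
        NormedSpace.exp ((-(I * (t : ℂ))) • H)‖
        ≤ gaussWeight σ t * 1 := mul_le_mul_of_nonneg_left hprod (gaussWeight_nonneg σ t)
      _ = gaussWeight σ t := mul_one _
  have hgauss : ∫ t : ℝ, gaussWeight σ t =
      Real.sqrt (π / σ ^ 2) * Real.sqrt (σ * Real.sqrt (2 / π)) := by
    unfold gaussWeight
    rw [MeasureTheory.integral_mul_const]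
    congr 1
    simpa [neg_mul] using integral_gaussian (σ ^ 2)
  calc (Real.sqrt (2 * π))⁻¹ * ‖∫ t : ℝ, (Complex.exp (-(I * ω * t)) * (gaussWeight σ t : ℂ)) •
      (NormedSpace.exp ((I * (t : ℂ)) • H) * A * NormedSpace.exp ((-(I * (t : ℂ))) • H))‖
      ≤ (Real.sqrt (2 * π))⁻¹ * ∫ t : ℝ, gaussWeight σ t :=
        mul_le_mul_of_nonneg_left hbound (by positivity)
    _ = (Real.sqrt (2 * π))⁻¹ * (Real.sqrt (σ * Real.sqrt (2 / π)) * Real.sqrt (π / σ ^ 2)) := by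
        rw [hgauss]; ring
    _ = (Real.sqrt (σ * Real.sqrt (2 * π)))⁻¹ := const_eq hσ

end Aux

/-- **Norm bound on imaginary-time conjugation of the operator Fourier transform:**
for Hermitian `H` and `‖A‖ ≤ 1`,
`‖e^{βH} Â_H(ω) e^{-βH}‖ ≤ e^{σ²β²} e^{βω} / √(σ√(2π))`. -/
theorem norm_exp_conj_oft_le {m : ℕ} (H A : Matrix (Fin m) (Fin m) ℂ)
    (hH : H.IsHermitian) (hA : ‖A‖ ≤ 1) (σ : ℝ) (hσ : 0 < σ) (β ω : ℝ) :
    ‖NormedSpace.exp ((β : ℂ) • H) * oftInt H A σ ω *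
        NormedSpace.exp ((-(β : ℂ)) • H)‖ ≤
      Real.exp (σ ^ 2 * β ^ 2) * Real.exp (β * ω) / Real.sqrt (σ * Real.sqrt (2 * π)) := by
  rcases Nat.eq_zero_or_pos m with hm | hm
  · subst hm
    rw [show NormedSpace.exp ((β : ℂ) • H) * oftInt H A σ ω *
        NormedSpace.exp ((-(β : ℂ)) • H) = 0 from Subsingleton.elim _ _, norm_zero]
    positivity
  · rw [exp_conj_oftInt hm H A hH hσ β ω, norm_smul]
    have h1 : ‖Complex.exp (((σ ^ 2 * β ^ 2 + β * ω : ℝ) : ℂ))‖ =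
        Real.exp (σ ^ 2 * β ^ 2 + β * ω) := by
      rw [Complex.norm_exp, Complex.ofReal_re]
    rw [h1]
    calc Real.exp (σ ^ 2 * β ^ 2 + β * ω) * ‖oftInt H A σ (ω + 2 * σ ^ 2 * β)‖
        ≤ Real.exp (σ ^ 2 * β ^ 2 + β * ω) * (Real.sqrt (σ * Real.sqrt (2 * π)))⁻¹ :=
          mul_le_mul_of_nonneg_left (norm_oftInt_le hm H A hH hA hσ _)
            (Real.exp_nonneg _)
      _ = Real.exp (σ ^ 2 * β ^ 2) * Real.exp (β * ω) / Real.sqrt (σ * Real.sqrt (2 * π)) := by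
          rw [div_eq_mul_inv, ← Real.exp_add]
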